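/- Fix s > 0. Let φ : [0,∞) → ℝ be bounded and continuous, and for λ > 0 define J_λ(t) := ∫₀ᵗ λ·e^(−λτ)·φ(τ) dτ + e^(−λt)·φ(t). Let ψ_λ(s) be real numbers (for λ > 0) and ψ(s) a real number with ψ_λ(s) → ψ(s) as λ → 0⁺. Then min{ inf_{t ∈ [0,s]} J_λ(t), ∫₀ˢ λ·e^(−λτ)·φ(τ) dτ + e^(−λs)·ψ_λ(s) } → min{ inf_{t ∈ [0,s]} φ(t), ψ(s) } as λ → 0⁺. (This is the trajectory-wise form of the corollary that the discounted state-action safety value Q^λ_s converges to the undiscounted state-action safety value Q_s as the discount factor λ approaches zero.) -/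

import Mathlib

open Real Filter Set intervalIntegral

lemma kernel_integral (lam t : ℝ) :
    (∫ τ in (0:ℝ)..t, lam * Real.exp (-(lam * τ))) = 1 - Real.exp (-(lam * t)) := by
  have h : ∀ x ∈ Set.uIcc (0:ℝ) t,
      HasDerivAt (fun τ => -Real.exp (-(lam * τ))) (lam * Real.exp (-(lam * x))) x := by
    intro x _
    have h1 : HasDerivAt (fun τ : ℝ => -(lam * τ)) (-lam) x := by
      exact (((hasDerivAt_id' x).const_mul lam).neg).congr_deriv (by ring)
    have := (Real.hasDerivAt_exp (-(lam * x))).comp x h1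
    exact this.neg.congr_deriv (by ring)
  have hint : IntervalIntegrable (fun x => lam * Real.exp (-(lam * x)))
      MeasureTheory.volume 0 t := by
    apply Continuous.intervalIntegrable
    continuity
  have := intervalIntegral.integral_eq_sub_of_hasDerivAt h hint
  simp at this
  rw [intervalIntegral.integral_const_mul]
  linarith

lemma kernel_phi_bound {lam t M : ℝ} (hlam : 0 < lam) (ht : 0 ≤ t) {φ : ℝ → ℝ}
    (hM : ∀ τ, 0 ≤ τ → |φ τ| ≤ M) (hφc : ContinuousOn φ (Set.Ici 0)) :
    |∫ τ in (0:ℝ)..t, lam * Real.exp (-(lam * τ)) * φ τ| ≤ M * (1 - Real.exp (-(lam * t))) := by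
  have hker : ContinuousOn (fun τ => lam * Real.exp (-(lam * τ)) * φ τ) (Set.Icc 0 t) := by
    apply ContinuousOn.mul
    · exact (Continuous.continuousOn (by continuity))
    · exact hφc.mono (fun x hx => hx.1)
  have hint1 : IntervalIntegrable (fun τ => lam * Real.exp (-(lam * τ)) * φ τ)
      MeasureTheory.volume 0 t := by
    apply ContinuousOn.intervalIntegrable
    rwa [Set.uIcc_of_le ht]
  have hint2 : IntervalIntegrable (fun τ => lam * Real.exp (-(lam * τ)) * M)
      MeasureTheory.volume 0 t := by
    apply Continuous.intervalIntegrable; continuity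
  have h1 : |∫ τ in (0:ℝ)..t, lam * Real.exp (-(lam * τ)) * φ τ|
      ≤ ∫ τ in (0:ℝ)..t, |lam * Real.exp (-(lam * τ)) * φ τ| := by
    have := intervalIntegral.norm_integral_le_integral_norm
      (μ := MeasureTheory.volume) (f := fun τ => lam * Real.exp (-(lam * τ)) * φ τ) ht
    simp only [Real.norm_eq_abs] at this
    exact this
  have h2 : (∫ τ in (0:ℝ)..t, |lam * Real.exp (-(lam * τ)) * φ τ|)
      ≤ ∫ τ in (0:ℝ)..t, lam * Real.exp (-(lam * τ)) * M := by
    apply intervalIntegral.integral_mono_on ht _ hint2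
    · intro x hx
      rw [abs_mul]
      have hk : |lam * Real.exp (-(lam * x))| = lam * Real.exp (-(lam * x)) := by
        rw [abs_of_nonneg]; positivity
      rw [hk]
      exact mul_le_mul_of_nonneg_left (hM x hx.1) (by positivity)
    · exact hint1.abs
  have h3 : (∫ τ in (0:ℝ)..t, lam * Real.exp (-(lam * τ)) * M)
      = M * (1 - Real.exp (-(lam * t))) := by
    have : (fun τ => lam * Real.exp (-(lam * τ)) * M) = (fun τ => M * (lam * Real.exp (-(lam * τ)))) := by
      funext τ; ring
    rw [this, intervalIntegral.integral_const_mul, kernel_integral]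
  linarith

lemma sInf_image_abs_sub_le {K : Set ℝ} (hne : K.Nonempty) {f g : ℝ → ℝ} {ε : ℝ}
    (hbf : BddBelow (f '' K)) (hbg : BddBelow (g '' K))
    (h : ∀ t ∈ K, |f t - g t| ≤ ε) :
    |sInf (f '' K) - sInf (g '' K)| ≤ ε := by
  have key : ∀ (p q : ℝ → ℝ), BddBelow (p '' K) → (∀ t ∈ K, p t - q t ≤ ε) →
      sInf (p '' K) - sInf (q '' K) ≤ ε := by
    intro p q hbp hpq
    have h1 : sInf (p '' K) - ε ≤ sInf (q '' K) := by
      apply le_csInf (hne.image q)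
      rintro b ⟨t, ht, rfl⟩
      have h2 : sInf (p '' K) ≤ p t := csInf_le hbp (Set.mem_image_of_mem p ht)
      have := hpq t ht
      linarith
    linarith
  rw [abs_sub_le_iff]
  constructor
  · exact key f g hbf (fun t ht => (abs_le.mp (h t ht)).2)
  · exact key g f hbg (fun t ht => by have := (abs_le.mp (h t ht)).1; linarith)


/-- **Q^λ_s converges to Q_s as λ → 0⁺ (trajectory-wise form).**
Fix `s > 0`, let `φ : [0,∞) → ℝ` be bounded and continuous, and set
`J_λ(t) = ∫₀ᵗ λ·e^(−λτ)·φ(τ) dτ + e^(−λt)·φ(t)`. If the reals `ψ_λ(s)` converge to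
`ψ(s)` as `λ → 0⁺`, then
`min { inf_{t ∈ [0,s]} J_λ(t), ∫₀ˢ λ·e^(−λτ)·φ(τ) dτ + e^(−λs)·ψ_λ(s) }`
converges to `min { inf_{t ∈ [0,s]} φ(t), ψ(s) }` as `λ → 0⁺`. -/
theorem discounted_Q_tendsto_undiscounted_Q
    (s : ℝ) (hs : 0 < s) (φ : ℝ → ℝ)
    (hφb : ∃ M, ∀ t, 0 ≤ t → |φ t| ≤ M)
    (hφc : ContinuousOn φ (Set.Ici 0))
    (ψlam : ℝ → ℝ) (ψs : ℝ)
    (hψ : Filter.Tendsto ψlam (nhdsWithin 0 (Set.Ioi 0)) (nhds ψs)) :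
    Filter.Tendsto
      (fun lam : ℝ =>
        min
          (sInf ((fun t : ℝ =>
            (∫ τ in (0:ℝ)..t, lam * Real.exp (-(lam * τ)) * φ τ)
              + Real.exp (-(lam * t)) * φ t) '' Set.Icc 0 s))
          ((∫ τ in (0:ℝ)..s, lam * Real.exp (-(lam * τ)) * φ τ)
            + Real.exp (-(lam * s)) * ψlam lam))
      (nhdsWithin 0 (Set.Ioi 0))
      (nhds (min (sInf (φ '' Set.Icc 0 s)) ψs)) := by
  obtain ⟨M0, hM0⟩ := hφb
  set M := max M0 0 with hMdef
  have hM : ∀ t, 0 ≤ t → |φ t| ≤ M := fun t ht => (hM0 t ht).trans (le_max_left _ _)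
  have hMnn : (0:ℝ) ≤ M := le_max_right _ _
  have hne : (Set.Icc (0:ℝ) s).Nonempty := ⟨0, le_refl 0, hs.le⟩
  -- the bound function tends to 0
  have hbound0 : Tendsto (fun lam : ℝ => 2 * M * (1 - Real.exp (-(lam * s))))
      (nhdsWithin 0 (Set.Ioi 0)) (nhds 0) := by
    have hc : Continuous (fun lam : ℝ => 2 * M * (1 - Real.exp (-(lam * s)))) := by continuity
    have := (hc.tendsto 0).mono_left (nhdsWithin_le_nhds (s := Set.Ioi 0))
    simpa using this
  have hbound0' : Tendsto (fun lam : ℝ => M * (1 - Real.exp (-(lam * s))))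
      (nhdsWithin 0 (Set.Ioi 0)) (nhds 0) := by
    have hc : Continuous (fun lam : ℝ => M * (1 - Real.exp (-(lam * s)))) := by continuity
    have := (hc.tendsto 0).mono_left (nhdsWithin_le_nhds (s := Set.Ioi 0))
    simpa using this
  -- Part A : the infimum converges
  have hA : Tendsto (fun lam : ℝ =>
      sInf ((fun t : ℝ => (∫ τ in (0:ℝ)..t, lam * Real.exp (-(lam * τ)) * φ τ)
        + Real.exp (-(lam * t)) * φ t) '' Set.Icc 0 s))
      (nhdsWithin 0 (Set.Ioi 0)) (nhds (sInf (φ '' Set.Icc 0 s))) := by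
    rw [tendsto_iff_dist_tendsto_zero]
    apply squeeze_zero' (g := fun lam : ℝ => 2 * M * (1 - Real.exp (-(lam * s))))
      (Filter.Eventually.of_forall fun _ => dist_nonneg) _ hbound0
    filter_upwards [self_mem_nhdsWithin] with lam hlam
    have hlam' : (0:ℝ) < lam := hlam
    rw [Real.dist_eq]
    apply sInf_image_abs_sub_le hne
    · -- BddBelow of J image
      refine ⟨-M, ?_⟩
      rintro y ⟨t, ht, rfl⟩
      have h1 := kernel_phi_bound hlam' ht.1 hM hφc
      have h2 : |Real.exp (-(lam * t)) * φ t| ≤ Real.exp (-(lam * t)) * M := by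
        rw [abs_mul, abs_of_nonneg (Real.exp_pos _).le]
        exact mul_le_mul_of_nonneg_left (hM t ht.1) (Real.exp_pos _).le
      have h3 : Real.exp (-(lam * t)) ≤ 1 := Real.exp_le_one_iff.mpr (by nlinarith [ht.1])
      have := abs_le.mp h1
      have := abs_le.mp h2
      simp only [neg_le]
      nlinarith [Real.exp_pos (-(lam * t))]
    · -- BddBelow of φ image
      refine ⟨-M, ?_⟩
      rintro y ⟨t, ht, rfl⟩
      have := abs_le.mp (hM t ht.1)
      linarith [this.1]
    · -- pointwise bound
      intro t ht
      have h1 := kernel_phi_bound hlam' ht.1 hM hφc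
      have h2 : |(Real.exp (-(lam * t)) - 1) * φ t| ≤ (1 - Real.exp (-(lam * t))) * M := by
        rw [abs_mul]
        have h3 : Real.exp (-(lam * t)) ≤ 1 := Real.exp_le_one_iff.mpr (by nlinarith [ht.1])
        rw [abs_of_nonpos (by linarith : Real.exp (-(lam * t)) - 1 ≤ 0)]
        have := hM t ht.1
        have hφnn := abs_nonneg (φ t)
        nlinarith
      have hts : Real.exp (-(lam * s)) ≤ Real.exp (-(lam * t)) := by
        apply Real.exp_le_exp.mpr
        nlinarith [ht.2]
      have heq : (∫ τ in (0:ℝ)..t, lam * Real.exp (-(lam * τ)) * φ τ)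
          + Real.exp (-(lam * t)) * φ t - φ t
          = (∫ τ in (0:ℝ)..t, lam * Real.exp (-(lam * τ)) * φ τ)
          + (Real.exp (-(lam * t)) - 1) * φ t := by ring
      rw [heq]
      calc |(∫ τ in (0:ℝ)..t, lam * Real.exp (-(lam * τ)) * φ τ)
          + (Real.exp (-(lam * t)) - 1) * φ t|
          ≤ |∫ τ in (0:ℝ)..t, lam * Real.exp (-(lam * τ)) * φ τ|
            + |(Real.exp (-(lam * t)) - 1) * φ t| := abs_add_le _ _
        _ ≤ 2 * M * (1 - Real.exp (-(lam * s))) := by nlinarith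
  -- Part B : the tail term converges
  have hI : Tendsto (fun lam : ℝ => ∫ τ in (0:ℝ)..s, lam * Real.exp (-(lam * τ)) * φ τ)
      (nhdsWithin 0 (Set.Ioi 0)) (nhds 0) := by
    rw [tendsto_iff_dist_tendsto_zero]
    apply squeeze_zero' (g := fun lam : ℝ => M * (1 - Real.exp (-(lam * s))))
      (Filter.Eventually.of_forall fun _ => dist_nonneg) _ hbound0'
    filter_upwards [self_mem_nhdsWithin] with lam hlam
    rw [Real.dist_eq, sub_zero]
    exact kernel_phi_bound hlam hs.le hM hφc
  have hE : Tendsto (fun lam : ℝ => Real.exp (-(lam * s)))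
      (nhdsWithin 0 (Set.Ioi 0)) (nhds 1) := by
    have hc : Continuous (fun lam : ℝ => Real.exp (-(lam * s))) := by continuity
    have := (hc.tendsto 0).mono_left (nhdsWithin_le_nhds (s := Set.Ioi 0))
    simpa using this
  have hB := hI.add (hE.mul hψ)
  rw [zero_add, one_mul] at hB
  exact hA.min hB
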